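/- arXiv:0708.1356 — 4 statements merged into one kernel-verified Lean document; each statement's English description precedes it below -/
import Mathlib

section
/- If U is a critical point of J(U) = tr(U ρ U† θ) (i.e., [θ, UρU†] = 0) where ρ and θ are diagonal Hermitian matrices, then there exist a unitary P commuting with θ, a permutation matrix π, and a unitary Q commuting with ρ such that U = P π Q. -/
open Matrix Polynomial

lemma aux_simul {N : ℕ} (θ A : Matrix (Fin N) (Fin N) ℂ) (hθd : θ.IsDiag)
    (hA : A.IsHermitian) (hc : θ * A = A * θ) :
    ∃ V ∈ Matrix.unitaryGroup (Fin N) ℂ, V * θ = θ * V ∧ (star V * A * V).IsDiag := by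
  classical
  set f : Fin N → ℂ := fun i => θ i i with hf
  have hθ : θ = Matrix.diagonal f := by
    ext i j
    by_cases h : i = j
    · subst h; simp [f]
    · simp [Matrix.diagonal_apply_ne _ h, hθd h]
  have hAsupp : ∀ k l, f k ≠ f l → A k l = 0 := by
    intro k l h
    have h1 := congrFun (congrFun hc k) l
    rw [hθ] at h1
    rw [Matrix.diagonal_mul, Matrix.mul_diagonal] at h1
    have h2 : A k l * (f k - f l) = 0 := by linear_combination h1
    rcases mul_eq_zero.mp h2 with h3 | h3
    · exact h3
    · exact absurd (sub_eq_zero.mp h3) h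
  let Ac : (c : ℂ) → Matrix {k : Fin N // f k = c} {k : Fin N // f k = c} ℂ :=
    fun c => A.submatrix Subtype.val Subtype.val
  have hAc : ∀ c, (Ac c).IsHermitian := fun c => hA.submatrix _
  let Vc : (c : ℂ) → Matrix {k : Fin N // f k = c} {k : Fin N // f k = c} ℂ :=
    fun c => ((hAc c).eigenvectorUnitary : Matrix _ _ ℂ)
  have hVcu : ∀ c, Vc c ∈ Matrix.unitaryGroup {k : Fin N // f k = c} ℂ :=
    fun c => ((hAc c).eigenvectorUnitary).2
  let V : Matrix (Fin N) (Fin N) ℂ :=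
    fun i j => if h : f i = f j then Vc (f j) ⟨i, h⟩ ⟨j, rfl⟩ else 0
  have hV : ∀ (c : ℂ) (i j : Fin N) (hi : f i = c) (hj : f j = c),
      V i j = Vc c ⟨i, hi⟩ ⟨j, hj⟩ := by
    intro c i j hi hj
    subst hj
    simp only [V, dif_pos hi]
  have hV0 : ∀ i j, f i ≠ f j → V i j = 0 := fun i j h => dif_neg h
  have hsum : ∀ (c : ℂ) (g : Fin N → ℂ), (∀ k, f k ≠ c → g k = 0) →
      ∑ k, g k = ∑ k : {k : Fin N // f k = c}, g k.val := by
    intro c g hg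
    rw [← Finset.sum_filter_of_ne (p := fun k => f k = c)
      (fun x _ hx => by_contra fun h => hx (hg x h))]
    exact Finset.sum_subtype _ (fun x => by simp) g
  have hVu : V ∈ Matrix.unitaryGroup (Fin N) ℂ := by
    rw [Matrix.mem_unitaryGroup_iff']
    ext i j
    rw [Matrix.mul_apply]
    have e1 : ∀ k, star V i k * V k j = star (V k i) * V k j := fun k => by
      rw [Matrix.star_eq_conjTranspose, Matrix.conjTranspose_apply]
    rw [Finset.sum_congr rfl (fun k _ => e1 k)]
    by_cases hij : f i = f j
    · rw [hsum (f j) _ (fun k hk => by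
        rw [hV0 k i (fun h => hk (h.trans hij)), star_zero, zero_mul])]
      have e2 : ∀ k : {k : Fin N // f k = f j},
          star (V k.val i) * V k.val j
            = star (Vc (f j) k ⟨i, hij⟩) * Vc (f j) k ⟨j, rfl⟩ := by
        rintro ⟨k, hk⟩
        rw [hV (f j) k i hk hij, hV (f j) k j hk rfl]
      rw [Finset.sum_congr rfl (fun k _ => e2 k)]
      have e3 := congrFun (congrFun (Matrix.mem_unitaryGroup_iff'.mp (hVcu (f j)))
        ⟨i, hij⟩) ⟨j, rfl⟩
      rw [Matrix.mul_apply] at e3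
      simp only [Matrix.star_eq_conjTranspose, Matrix.conjTranspose_apply] at e3
      rw [e3]
      by_cases hij' : i = j
      · subst hij'; simp
      · rw [Matrix.one_apply_ne hij', Matrix.one_apply_ne (by
          simp only [ne_eq, Subtype.mk.injEq]; exact hij')]
    · have hne : i ≠ j := fun h => hij (by rw [h])
      rw [Matrix.one_apply_ne hne]
      apply Finset.sum_eq_zero
      intro k _
      by_cases hk : f k = f i
      · rw [hV0 k j (fun h => hij (hk.symm.trans h)), mul_zero]
      · rw [hV0 k i hk, star_zero, zero_mul]
  have hVθ : V * θ = θ * V := by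
    rw [hθ]
    ext i j
    rw [Matrix.mul_diagonal, Matrix.diagonal_mul]
    by_cases h : f i = f j
    · rw [h]; ring
    · rw [hV0 i j h, zero_mul, mul_zero]
  refine ⟨V, hVu, hVθ, ?_⟩
  intro i j hij
  rw [Matrix.mul_apply]
  have e1 : ∀ l, (star V * A) i l * V l j
      = (∑ k, star (V k i) * A k l) * V l j := fun l => by
    simp only [Matrix.mul_apply, Matrix.star_eq_conjTranspose, Matrix.conjTranspose_apply]
  rw [Finset.sum_congr rfl (fun l _ => e1 l)]
  by_cases hij' : f i = f j
  · -- restrict both sums to the fiber of c := f j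
    rw [hsum (f j) _ (fun l hl => by rw [hV0 l j fun h => hl h, mul_zero])]
    have e2 : ∀ l : {k : Fin N // f k = f j},
        (∑ k, star (V k i) * A k l.val) * V l.val j
          = (∑ k : {k : Fin N // f k = f j},
              star (Vc (f j) k ⟨i, hij'⟩) * Ac (f j) k l) * Vc (f j) l ⟨j, rfl⟩ := by
      rintro ⟨l, hl⟩
      rw [hV (f j) l j hl rfl]
      congr 1
      rw [hsum (f j) _ (fun k hk => by
        rw [hV0 k i (fun h => hk (h.trans hij')), star_zero, zero_mul])]
      refine Finset.sum_congr rfl fun k _ => ?_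
      rw [hV (f j) k i k.2 hij']
      rfl
    rw [Finset.sum_congr rfl (fun l _ => e2 l)]
    have e3 := congrFun (congrFun (show star (Vc (f j)) * Ac (f j) * Vc (f j) = diagonal (RCLike.ofReal ∘ (hAc (f j)).eigenvalues) by
      have := (hAc (f j)).conjStarAlgAut_star_eigenvectorUnitary
      rw [Unitary.conjStarAlgAut_star_apply] at this
      exact this) ⟨i, hij'⟩) ⟨j, rfl⟩
    rw [Matrix.mul_apply] at e3
    have e5 : ∀ l : {k : Fin N // f k = f j},
        (star (Vc (f j)) * Ac (f j)) ⟨i, hij'⟩ l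
          = ∑ k : {k : Fin N // f k = f j}, star (Vc (f j) k ⟨i, hij'⟩) * Ac (f j) k l := by
      intro l
      rw [Matrix.mul_apply]
      refine Finset.sum_congr rfl fun k _ => ?_
      rw [Matrix.star_eq_conjTranspose, Matrix.conjTranspose_apply]
    rw [Finset.sum_congr rfl (fun l _ => by rw [← e5 l]), e3]
    rw [Matrix.diagonal_apply_ne]
    simp only [ne_eq, Subtype.mk.injEq]
    exact hij
  · apply Finset.sum_eq_zero
    intro l _
    by_cases hl : f l = f j
    · have : ∀ k, star (V k i) * A k l = 0 := by
        intro k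
        by_cases hk : f k = f i
        · rw [hAsupp k l (by rw [hk, hl]; exact hij'), mul_zero]
        · rw [hV0 k i hk, star_zero, zero_mul]
      rw [Finset.sum_congr rfl (fun k _ => this k), Finset.sum_const_zero, zero_mul]
    · rw [hV0 l j hl, mul_zero]

lemma aux_charpoly_diagonal {n : Type*} [Fintype n] [DecidableEq n] (d : n → ℂ) :
    (Matrix.diagonal d).charpoly = ∏ i, (X - C (d i)) := by
  have h : (Matrix.diagonal d).charmatrix = Matrix.diagonal fun i => X - C (d i) := by
    ext i j
    by_cases h : i = j
    · subst h; rw [Matrix.charmatrix_apply_eq, Matrix.diagonal_apply_eq, Matrix.diagonal_apply_eq]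
    · rw [Matrix.charmatrix_apply_ne _ _ _ h, Matrix.diagonal_apply_ne _ h,
        Matrix.diagonal_apply_ne _ h, map_zero, neg_zero]
  rw [Matrix.charpoly, h, Matrix.det_diagonal]

lemma aux_charpoly_conj {n : Type*} [Fintype n] [DecidableEq n] (P M P' : Matrix n n ℂ)
    (h1 : P * P' = 1) : (P * M * P').charpoly = M.charpoly := by
  have key : (P * M * P').charmatrix = P.map C * M.charmatrix * P'.map C := by
    show Matrix.scalar n (X : ℂ[X]) - (C : ℂ →+* ℂ[X]).mapMatrix (P * M * P')
      = P.map C * (Matrix.scalar n (X : ℂ[X]) - (C : ℂ →+* ℂ[X]).mapMatrix M) * P'.map C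
    rw [Matrix.mul_sub, Matrix.sub_mul]
    congr 1
    · have h2 : P.map C * Matrix.scalar n (X : ℂ[X]) * P'.map C
          = Matrix.scalar n (X : ℂ[X]) * (P.map C * P'.map C) := by
        rw [(Matrix.scalar_commute (X : ℂ[X]) (fun r => Commute.all _ _) (P.map C)).symm.eq,
          Matrix.mul_assoc]
      rw [h2, ← Matrix.map_mul, h1, Matrix.map_one _ (map_zero C) (map_one C), mul_one]
    · show (RingHom.mapMatrix C) (P * M * P') = _
      rw [RingHom.mapMatrix_apply, Matrix.map_mul, Matrix.map_mul]
      rfl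
  rw [Matrix.charpoly, Matrix.charpoly, key, Matrix.det_mul, Matrix.det_mul]
  have h3 : ((P.map C).det) * ((P'.map C).det) = 1 := by
    rw [← Matrix.det_mul, ← Matrix.map_mul, h1, Matrix.map_one _ (map_zero C) (map_one C),
      Matrix.det_one]
  ring_nf
  calc (P.map C).det * M.charmatrix.det * (P'.map C).det
      = M.charmatrix.det * ((P.map C).det * (P'.map C).det) := by ring
    _ = M.charmatrix.det := by rw [h3, mul_one]

private def auxSigmaFiber {N : ℕ} (f : Fin N → ℂ) : (Σ c : ℂ, {j : Fin N // f j = c}) ≃ Fin N where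
  toFun x := x.2.1
  invFun j := ⟨f j, j, rfl⟩
  left_inv := by rintro ⟨c, j, rfl⟩; rfl
  right_inv j := rfl

lemma aux_exists_perm {N : ℕ} (r d : Fin N → ℂ)
    (h : Multiset.map r Finset.univ.val = Multiset.map d Finset.univ.val) :
    ∃ σ : Equiv.Perm (Fin N), ∀ i, r (σ i) = d i := by
  classical
  have hcard : ∀ c : ℂ, Fintype.card {j : Fin N // d j = c} = Fintype.card {j : Fin N // r j = c} := by
    intro c
    rw [Fintype.card_subtype, Fintype.card_subtype]
    have h2 := congrArg (Multiset.count c) h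
    rw [Multiset.count_map, Multiset.count_map] at h2
    have e1 : Multiset.filter (fun a => c = r a) Finset.univ.val
        = Multiset.filter (fun a => r a = c) Finset.univ.val :=
      Multiset.filter_congr (fun x _ => eq_comm)
    have e2 : Multiset.filter (fun a => c = d a) Finset.univ.val
        = Multiset.filter (fun a => d a = c) Finset.univ.val :=
      Multiset.filter_congr (fun x _ => eq_comm)
    rw [e1, e2] at h2
    rw [Finset.card, Finset.card, Finset.filter_val, Finset.filter_val]
    exact h2.symm
  let e : ∀ c : ℂ, {j : Fin N // d j = c} ≃ {j : Fin N // r j = c} :=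
    fun c => Fintype.equivOfCardEq (hcard c)
  refine ⟨((auxSigmaFiber d).symm.trans (Equiv.sigmaCongrRight e)).trans (auxSigmaFiber r), ?_⟩
  intro i
  exact (e (d i) ⟨i, rfl⟩).2

section AlgAux

variable {n : Type*} [Fintype n] [DecidableEq n]

lemma aux_alg0 (V U ρ : Matrix n n ℂ) :
    (star V * U) * ρ * star (star V * U) = star V * (U * ρ * Uᴴ) * V := by
  have h : star (star V * U) = star U * V := by rw [Matrix.star_mul, star_star]
  rw [h]
  simp only [Matrix.star_eq_conjTranspose, Matrix.mul_assoc]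

lemma aux_alg1 (W ρ D : Matrix n n ℂ) (hWW : star W * W = 1)
    (hWρ : W * ρ * star W = D) : W * ρ = D * W := by
  calc W * ρ = W * ρ * (star W * W) := by rw [hWW, mul_one]
    _ = W * ρ * star W * W := by rw [← mul_assoc]
    _ = D * W := by rw [hWρ]

lemma aux_alg1' (W ρ D : Matrix n n ℂ) (hWW : star W * W = 1)
    (hWρ2 : W * ρ = D * W) : ρ = star W * D * W := by
  calc ρ = (star W * W) * ρ := by rw [hWW, one_mul]
    _ = star W * (W * ρ) := by rw [mul_assoc]
    _ = star W * (D * W) := by rw [hWρ2]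
    _ = star W * D * W := by rw [← mul_assoc]

lemma aux_alg2 (P W ρ D : Matrix n n ℂ) (hWρ2 : W * ρ = D * W)
    (hkey : P * D = ρ * P) : (P * W) * ρ = ρ * (P * W) := by
  calc P * W * ρ = P * (W * ρ) := by rw [mul_assoc]
    _ = P * (D * W) := by rw [hWρ2]
    _ = P * D * W := by rw [← mul_assoc]
    _ = ρ * P * W := by rw [hkey]
    _ = ρ * (P * W) := by rw [mul_assoc]

lemma aux_alg3 (V U Pm Pm' : Matrix n n ℂ) (hVV : V * star V = 1)
    (hPP : Pm * Pm' = 1) : U = V * Pm * (Pm' * (star V * U)) := by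
  calc U = 1 * U := by rw [one_mul]
    _ = V * star V * U := by rw [hVV]
    _ = V * (star V * U) := by rw [mul_assoc]
    _ = V * (1 * (star V * U)) := by rw [one_mul]
    _ = V * (Pm * Pm' * (star V * U)) := by rw [hPP]
    _ = V * (Pm * (Pm' * (star V * U))) := by rw [mul_assoc]
    _ = V * Pm * (Pm' * (star V * U)) := by rw [← mul_assoc, ← mul_assoc]

end AlgAux

/-- If `U` is a critical point of `J(U) = tr(U ρ U† θ)` (i.e. `[θ, UρU†] = 0`) with `ρ, θ`
diagonal Hermitian, then `U = P π Q` with `P` unitary commuting with `θ`, `π` a permutation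
matrix, and `Q` unitary commuting with `ρ`. -/
theorem stmt5 (N : ℕ) (ρ θ U : Matrix (Fin N) (Fin N) ℂ)
    (hρd : ρ.IsDiag) (hθd : θ.IsDiag) (hρ : ρ.IsHermitian) (hθ : θ.IsHermitian)
    (hU : U ∈ Matrix.unitaryGroup (Fin N) ℂ)
    (hcrit : θ * (U * ρ * Uᴴ) - (U * ρ * Uᴴ) * θ = 0) :
    ∃ P ∈ Matrix.unitaryGroup (Fin N) ℂ, ∃ Q ∈ Matrix.unitaryGroup (Fin N) ℂ,
      ∃ σ : Equiv.Perm (Fin N),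
        P * θ = θ * P ∧ Q * ρ = ρ * Q ∧ U = P * σ.permMatrix ℂ * Q := by
  classical
  have hA : (U * ρ * Uᴴ).IsHermitian := Matrix.isHermitian_mul_mul_conjTranspose U hρ
  have hcomm : θ * (U * ρ * Uᴴ) = (U * ρ * Uᴴ) * θ := sub_eq_zero.mp hcrit
  obtain ⟨V, hVu, hVθ, hDdiag⟩ := aux_simul θ (U * ρ * Uᴴ) hθd hA hcomm
  have hWu : star V * U ∈ Matrix.unitaryGroup (Fin N) ℂ := mul_mem (Unitary.star_mem hVu) hU
  have hWW : star (star V * U) * (star V * U) = 1 := Matrix.mem_unitaryGroup_iff'.mp hWu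
  have hWρ : (star V * U) * ρ * star (star V * U) = star V * (U * ρ * Uᴴ) * V :=
    aux_alg0 V U ρ
  have hWρ2 : (star V * U) * ρ = (star V * (U * ρ * Uᴴ) * V) * (star V * U) :=
    aux_alg1 _ _ _ hWW hWρ
  have hsim : ρ = star (star V * U) * (star V * (U * ρ * Uᴴ) * V) * (star V * U) :=
    aux_alg1' _ _ _ hWW hWρ2
  have hρdg : ρ = Matrix.diagonal (fun i => ρ i i) := by
    ext i j
    by_cases h : i = j
    · subst h; simp
    · simp [Matrix.diagonal_apply_ne _ h, hρd h]
  have hDdg : star V * (U * ρ * Uᴴ) * V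
      = Matrix.diagonal (fun i => (star V * (U * ρ * Uᴴ) * V) i i) := by
    ext i j
    by_cases h : i = j
    · subst h; simp
    · simp [Matrix.diagonal_apply_ne _ h, hDdiag h]
  have hchar : (Matrix.diagonal (fun i => ρ i i)).charpoly
      = (Matrix.diagonal (fun i => (star V * (U * ρ * Uᴴ) * V) i i)).charpoly := by
    rw [← hρdg, ← hDdg]
    calc ρ.charpoly
        = (star (star V * U) * (star V * (U * ρ * Uᴴ) * V) * (star V * U)).charpoly := by
          rw [← hsim]
      _ = (star V * (U * ρ * Uᴴ) * V).charpoly := aux_charpoly_conj _ _ _ hWW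
  have hr : ∀ g : Fin N → ℂ, (∏ i, (X - C (g i)))
      = ((Multiset.map g Finset.univ.val).map fun a => X - C a).prod := by
    intro g
    rw [Multiset.map_map]
    rfl
  have hmults : Multiset.map (fun i => ρ i i) Finset.univ.val
      = Multiset.map (fun i => (star V * (U * ρ * Uᴴ) * V) i i) Finset.univ.val := by
    rw [aux_charpoly_diagonal, aux_charpoly_diagonal] at hchar
    have h2 := congrArg Polynomial.roots hchar
    rw [hr, hr, Polynomial.roots_multiset_prod_X_sub_C,
      Polynomial.roots_multiset_prod_X_sub_C] at h2
    exact h2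
  obtain ⟨σ0, hσ0⟩ := aux_exists_perm _ _ hmults
  -- permutation matrix facts
  have hPmul : ∀ a b : Equiv.Perm (Fin N),
      a.permMatrix ℂ * b.permMatrix ℂ = (b * a).permMatrix ℂ := by
    intro a b
    show a.toPEquiv.toMatrix * b.toPEquiv.toMatrix = (b * a).toPEquiv.toMatrix
    rw [← PEquiv.toMatrix_trans, ← Equiv.toPEquiv_trans]
    rfl
  have hPone : ((1 : Equiv.Perm (Fin N)).permMatrix ℂ) = 1 := by
    show (Equiv.refl (Fin N)).toPEquiv.toMatrix = 1
    rw [Equiv.toPEquiv_refl, PEquiv.toMatrix_refl]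
  have hPstar : ∀ a : Equiv.Perm (Fin N),
      star (a.permMatrix ℂ) = (a⁻¹).permMatrix ℂ := by
    intro a
    ext i j
    simp only [Equiv.Perm.permMatrix]
    rw [Matrix.star_eq_conjTranspose, Matrix.conjTranspose_apply,
      PEquiv.toMatrix_apply, PEquiv.toMatrix_apply, Equiv.toPEquiv_apply,
      Equiv.toPEquiv_apply]
    by_cases h : a j = i
    · have h2 : a⁻¹ i = j := by rw [← h]; exact a.symm_apply_apply j
      simp [h, h2]
    · have h2 : a⁻¹ i ≠ j := fun hh => h (by rw [← hh]; exact a.apply_symm_apply i)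
      simpa [h] using h2
  have hPu : ∀ a : Equiv.Perm (Fin N),
      a.permMatrix ℂ ∈ Matrix.unitaryGroup (Fin N) ℂ := by
    intro a
    rw [Matrix.mem_unitaryGroup_iff', hPstar, hPmul, mul_inv_cancel, hPone]
  have hQu : (σ0⁻¹).permMatrix ℂ * (star V * U) ∈ Matrix.unitaryGroup (Fin N) ℂ :=
    mul_mem (hPu _) hWu
  have hkey : (σ0⁻¹).permMatrix ℂ * (star V * (U * ρ * Uᴴ) * V)
      = ρ * (σ0⁻¹).permMatrix ℂ := by
    rw [hDdg]
    conv_rhs => rw [hρdg]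
    show (σ0⁻¹).toPEquiv.toMatrix * Matrix.diagonal _
      = Matrix.diagonal _ * (σ0⁻¹).toPEquiv.toMatrix
    rw [PEquiv.toMatrix_toPEquiv_mul, PEquiv.mul_toMatrix_toPEquiv]
    ext i j
    rw [Matrix.submatrix_apply, Matrix.submatrix_apply, id_eq, id_eq]
    by_cases h : σ0⁻¹ i = j
    · have h' : i = (σ0⁻¹).symm j := by rw [← h]; exact ((σ0⁻¹).symm_apply_apply i).symm
      rw [h, h', Matrix.diagonal_apply_eq, Matrix.diagonal_apply_eq, ← hσ0 j]
      rfl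
    · have h' : i ≠ (σ0⁻¹).symm j := by
        intro hh
        apply h
        rw [hh]
        simp
      rw [Matrix.diagonal_apply_ne _ h, Matrix.diagonal_apply_ne _ h']
  have hQρ : ((σ0⁻¹).permMatrix ℂ * (star V * U)) * ρ
      = ρ * ((σ0⁻¹).permMatrix ℂ * (star V * U)) :=
    aux_alg2 _ _ _ _ hWρ2 hkey
  have hfac : U = V * σ0.permMatrix ℂ * ((σ0⁻¹).permMatrix ℂ * (star V * U)) := by
    have hPP : σ0.permMatrix ℂ * (σ0⁻¹).permMatrix ℂ = 1 := by
      rw [hPmul, inv_mul_cancel, hPone]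
    exact aux_alg3 V U _ _ (Matrix.mem_unitaryGroup_iff.mp hVu) hPP
  exact ⟨V, hVu, (σ0⁻¹).permMatrix ℂ * (star V * U), hQu, σ0, hVθ, hQρ, hfac⟩
end

section
/- Two permutations σ and τ of {1,…,N} give rise to the same contingency table (with respect to fixed level-set partitions of sizes n_1,…,n_r and m_1,…,m_s) if and only if there exist permutations α preserving each block of the n-partition and β preserving each block of the m-partition such that τ = β σ α. -/
/-- Two permutations `σ, τ` of `{1,…,N}` have the same contingency table with respect to
the partitions given by the fibers of the block-labelling maps `f` (the `n`-partition) and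
`g` (the `m`-partition) iff `τ = β σ α` for some permutations `α` preserving every block of
the `n`-partition and `β` preserving every block of the `m`-partition: contingency tables
classify the double cosets `(S_{m_1}×⋯×S_{m_s}) \ S_N / (S_{n_1}×⋯×S_{n_r})`. -/
theorem stmt10 (N r s : ℕ) (f : Fin N → Fin r) (g : Fin N → Fin s)
    (σ τ : Equiv.Perm (Fin N)) :
    ((fun (i : Fin r) (j : Fin s) =>
        (Finset.univ.filter (fun p : Fin N => f p = i ∧ g (σ p) = j)).card) =
      (fun (i : Fin r) (j : Fin s) =>
        (Finset.univ.filter (fun p : Fin N => f p = i ∧ g (τ p) = j)).card)) ↔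
    ∃ α β : Equiv.Perm (Fin N),
      (∀ p, f (α p) = f p) ∧ (∀ p, g (β p) = g p) ∧ τ = β * σ * α := by
  constructor
  · intro h
    set a : Fin N → Fin r × Fin s := fun p => (f p, g (σ p)) with ha
    set b : Fin N → Fin r × Fin s := fun p => (f p, g (τ p)) with hb
    have hc : ∀ y : Fin r × Fin s,
        Fintype.card {p // b p = y} = Fintype.card {p // a p = y} := by
      rintro ⟨i, j⟩
      have h1 := congrFun (congrFun h i) j
      simp only [Fintype.card_subtype]
      convert h1.symm using 2 <;> ext p <;> simp [a, b, Prod.ext_iff]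
    let α : Equiv.Perm (Fin N) :=
      (Equiv.sigmaFiberEquiv b).symm.trans
        ((Equiv.sigmaCongrRight fun y => Fintype.equivOfCardEq (hc y)).trans
          (Equiv.sigmaFiberEquiv a))
    have key : ∀ p, a (α p) = b p := by
      intro p
      have h1 : ∀ z : Σ y : Fin r × Fin s, {x // a x = y},
          a ((Equiv.sigmaFiberEquiv a) z) = z.1 := fun z => z.2.2
      have h2 : α p = (Equiv.sigmaFiberEquiv a)
          ((Equiv.sigmaCongrRight fun y => Fintype.equivOfCardEq (hc y))
            ((Equiv.sigmaFiberEquiv b).symm p)) := rfl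
      rw [h2, h1]; rfl
    refine ⟨α, τ * α⁻¹ * σ⁻¹, fun p => congrArg Prod.fst (key p), ?_, by group⟩
    intro q
    have hk := key (α⁻¹ (σ⁻¹ q))
    have h3 : α (α⁻¹ (σ⁻¹ q)) = σ⁻¹ q := Equiv.apply_symm_apply α _
    rw [h3] at hk
    have h4 := congrArg Prod.snd hk
    simp only [a, b] at h4
    have h5 : σ (σ⁻¹ q) = q := Equiv.apply_symm_apply σ q
    rw [h5] at h4
    simpa [Equiv.Perm.mul_apply] using h4.symm
  · rintro ⟨α, β, hα, hβ, rfl⟩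
    funext i j
    refine Finset.card_bij' (fun p _ => α⁻¹ p) (fun q _ => α q) ?_ ?_ ?_ ?_
    · intro p hp
      simp only [Finset.mem_filter, Finset.mem_univ, true_and] at hp ⊢
      have h1 : f (α⁻¹ p) = f p := by
        conv_rhs => rw [← (show α (α⁻¹ p) = p from Equiv.apply_symm_apply α p), hα]
      refine ⟨h1.trans hp.1, ?_⟩
      have h2 : (β * σ * α) (α⁻¹ p) = β (σ p) := by
        simp [Equiv.Perm.mul_apply]
      rw [h2, hβ]
      exact hp.2
    · intro q hq
      simp only [Finset.mem_filter, Finset.mem_univ, true_and] at hq ⊢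
      refine ⟨(hα q).trans hq.1, ?_⟩
      have := hq.2
      simp only [Equiv.Perm.mul_apply] at this
      rwa [hβ] at this
    · intro p _; exact Equiv.apply_symm_apply α p
    · intro q _; exact Equiv.symm_apply_apply α q
end

section
/- Let K be an r×s nonnegative integer contingency table with row sums n_1,…,n_r > 0 and column sums m_1,…,m_s > 0 (r, s ≥ 2). Then D_+(K) = 2 Σ_{(i−p)(j−q)<0} k_{ij}k_{pq} = 0 if and only if K is 'staircase-ordered', i.e., there are no pairs (i,j), (p,q) with k_{ij} > 0, k_{pq} > 0, i < p and j > q. Moreover, among all contingency tables with the given margins, exactly one satisfies D_+(K) = 0. -/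
namespace Stmt17Aux

open Finset

/-- cumulative sum of the first `a` values -/
def cum (r : ℕ) (n : Fin r → ℕ) (a : ℕ) : ℕ := ∑ i : Fin r, if i.val < a then n i else 0

lemma sum_ite_val {k : ℕ} (f : Fin k → ℕ) (a : ℕ) :
    (∑ i : Fin k, if i.val = a then f i else 0) = if h : a < k then f ⟨a, h⟩ else 0 := by
  by_cases h : a < k
  · rw [dif_pos h, Finset.sum_eq_single (⟨a, h⟩ : Fin k)]
    · simp
    · intro i _ hne
      exact if_neg fun hv => hne (Fin.ext hv)
    · simp
  · rw [dif_neg h]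
    exact Finset.sum_eq_zero fun i _ => if_neg (by have := i.isLt; omega)

lemma cum_zero {r : ℕ} (n : Fin r → ℕ) : cum r n 0 = 0 := by simp [cum]

lemma cum_succ {r : ℕ} (n : Fin r → ℕ) (a : ℕ) :
    cum r n (a + 1) = cum r n a + (if h : a < r then n ⟨a, h⟩ else 0) := by
  unfold cum
  rw [← sum_ite_val n a, ← Finset.sum_add_distrib]
  refine Finset.sum_congr rfl fun i _ => ?_
  split_ifs <;> omega

lemma cum_mono {r : ℕ} (n : Fin r → ℕ) : Monotone (cum r n) := by
  intro a b hab
  refine Finset.sum_le_sum fun i _ => ?_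
  split_ifs <;> omega

lemma cum_top {r : ℕ} (n : Fin r → ℕ) {a : ℕ} (h : r ≤ a) : cum r n a = ∑ i, n i :=
  Finset.sum_congr rfl fun i _ => if_pos (lt_of_lt_of_le i.isLt h)

/-- partial sum of the matrix over the top-left `a × b` block -/
def pp {r s : ℕ} (K : Matrix (Fin r) (Fin s) ℕ) (a b : ℕ) : ℕ :=
  ∑ i : Fin r, ∑ j : Fin s, if i.val < a ∧ j.val < b then K i j else 0

def StairP {r s : ℕ} (K : Matrix (Fin r) (Fin s) ℕ) : Prop :=
  ∀ i p : Fin r, ∀ j q : Fin s, 0 < K i j → 0 < K p q → i < p → ¬ q < j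

lemma exists_pos_of_sum_pos {r s : ℕ} {f : Fin r → Fin s → ℕ}
    (h : 0 < ∑ i, ∑ j, f i j) : ∃ i j, 0 < f i j := by
  by_contra hc
  push_neg at hc
  have : ∑ i : Fin r, ∑ j : Fin s, f i j = 0 :=
    Finset.sum_eq_zero fun i _ => Finset.sum_eq_zero fun j _ => Nat.le_zero.mp (hc i j)
  omega

lemma pp_row {r s : ℕ} {n : Fin r → ℕ} (K : Matrix (Fin r) (Fin s) ℕ)
    (hK : ∀ i, ∑ j, K i j = n i) (a b : ℕ) :
    pp K a b + (∑ i : Fin r, ∑ j : Fin s, if i.val < a ∧ ¬ j.val < b then K i j else 0)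
      = cum r n a := by
  unfold pp cum
  rw [← Finset.sum_add_distrib]
  refine Finset.sum_congr rfl fun i _ => ?_
  rw [← Finset.sum_add_distrib]
  by_cases h : i.val < a
  · rw [if_pos h, ← hK i]
    refine Finset.sum_congr rfl fun j _ => ?_
    by_cases hj : j.val < b <;> simp [h, hj]
  · rw [if_neg h]
    exact Finset.sum_eq_zero fun j _ => by simp [h]

lemma pp_col {r s : ℕ} {m : Fin s → ℕ} (K : Matrix (Fin r) (Fin s) ℕ)
    (hK : ∀ j, ∑ i, K i j = m j) (a b : ℕ) :
    pp K a b + (∑ i : Fin r, ∑ j : Fin s, if ¬ i.val < a ∧ j.val < b then K i j else 0)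
      = cum s m b := by
  unfold pp cum
  rw [Finset.sum_comm (f := fun i (j : Fin s) => if i.val < a ∧ j.val < b then K i j else 0),
    Finset.sum_comm (f := fun i (j : Fin s) => if ¬ i.val < a ∧ j.val < b then K i j else 0),
    ← Finset.sum_add_distrib]
  refine Finset.sum_congr rfl fun j _ => ?_
  rw [← Finset.sum_add_distrib]
  by_cases h : j.val < b
  · rw [if_pos h, ← hK j]
    refine Finset.sum_congr rfl fun i _ => ?_
    by_cases hi : i.val < a <;> simp [h, hi]
  · rw [if_neg h]
    exact Finset.sum_eq_zero fun i _ => by simp [h]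

lemma pp_eq_min {r s : ℕ} {n : Fin r → ℕ} {m : Fin s → ℕ} (K : Matrix (Fin r) (Fin s) ℕ)
    (hKr : ∀ i, ∑ j, K i j = n i) (hKc : ∀ j, ∑ i, K i j = m j)
    (hst : StairP K) (a b : ℕ) :
    pp K a b = min (cum r n a) (cum s m b) := by
  have h1 := pp_row K hKr a b
  have h2 := pp_col K hKc a b
  set Q1 := ∑ i : Fin r, ∑ j : Fin s, if i.val < a ∧ ¬ j.val < b then K i j else 0 with hQ1
  set Q2 := ∑ i : Fin r, ∑ j : Fin s, if ¬ i.val < a ∧ j.val < b then K i j else 0 with hQ2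
  rcases Nat.eq_zero_or_pos Q1 with h | h
  · omega
  rcases Nat.eq_zero_or_pos Q2 with h' | h'
  · omega
  exfalso
  obtain ⟨i, j, hij⟩ := exists_pos_of_sum_pos h
  obtain ⟨p, q, hpq⟩ := exists_pos_of_sum_pos h'
  by_cases c1 : i.val < a ∧ ¬ j.val < b
  · by_cases c2 : ¬ p.val < a ∧ q.val < b
    · rw [if_pos c1] at hij
      rw [if_pos c2] at hpq
      exact hst i p j q hij hpq (by omega) (by omega)
    · rw [if_neg c2] at hpq; omega
  · rw [if_neg c1] at hij; omega

lemma pp_diag {r s : ℕ} (K : Matrix (Fin r) (Fin s) ℕ) (a b : ℕ) :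
    pp K (a + 1) (b + 1) + pp K a b =
      pp K (a + 1) b + pp K a (b + 1) +
        (if h : a < r ∧ b < s then K ⟨a, h.1⟩ ⟨b, h.2⟩ else 0) := by
  have hdiag : (∑ i : Fin r, ∑ j : Fin s, if i.val = a ∧ j.val = b then K i j else 0)
      = if h : a < r ∧ b < s then K ⟨a, h.1⟩ ⟨b, h.2⟩ else 0 := by
    have e1 : ∀ i : Fin r, (∑ j : Fin s, if i.val = a ∧ j.val = b then K i j else 0)
        = if i.val = a then (if h : b < s then K i ⟨b, h⟩ else 0) else 0 := by
      intro i
      by_cases hi : i.val = a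
      · simp only [hi, true_and, if_pos]
        exact sum_ite_val (fun j => K i j) b
      · simp [hi]
    rw [Finset.sum_congr rfl fun i _ => e1 i, sum_ite_val (fun i => if h : b < s then K i ⟨b, h⟩ else 0) a]
    by_cases ha : a < r <;> by_cases hb : b < s <;> simp [ha, hb]
  rw [← hdiag]
  unfold pp
  rw [← Finset.sum_add_distrib, ← Finset.sum_add_distrib, ← Finset.sum_add_distrib]
  refine Finset.sum_congr rfl fun i _ => ?_
  rw [← Finset.sum_add_distrib, ← Finset.sum_add_distrib, ← Finset.sum_add_distrib]
  refine Finset.sum_congr rfl fun j _ => ?_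
  split_ifs <;> omega

lemma stair_unique {r s : ℕ} {n : Fin r → ℕ} {m : Fin s → ℕ}
    (K L : Matrix (Fin r) (Fin s) ℕ)
    (hKr : ∀ i, ∑ j, K i j = n i) (hKc : ∀ j, ∑ i, K i j = m j) (hKs : StairP K)
    (hLr : ∀ i, ∑ j, L i j = n i) (hLc : ∀ j, ∑ i, L i j = m j) (hLs : StairP L) :
    K = L := by
  have hpp : ∀ a b, pp K a b = pp L a b := fun a b => by
    rw [pp_eq_min K hKr hKc hKs, pp_eq_min L hLr hLc hLs]
  funext i j
  have hK := pp_diag K i.val j.val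
  have hL := pp_diag L i.val j.val
  have hc : i.val < r ∧ j.val < s := ⟨i.isLt, j.isLt⟩
  rw [dif_pos hc] at hK hL
  simp only [Fin.eta] at hK hL
  have e1 := hpp (i.val + 1) (j.val + 1)
  have e2 := hpp i.val j.val
  have e3 := hpp (i.val + 1) j.val
  have e4 := hpp i.val (j.val + 1)
  omega

/-- northwest corner matrix -/
def nw {r s : ℕ} (n : Fin r → ℕ) (m : Fin s → ℕ) : Matrix (Fin r) (Fin s) ℕ :=
  fun i j => min (cum r n (i.val + 1)) (cum s m (j.val + 1)) - max (cum r n i.val) (cum s m j.val)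

lemma nw_symm {r s : ℕ} (n : Fin r → ℕ) (m : Fin s → ℕ) (i : Fin r) (j : Fin s) :
    nw n m i j = nw m n j i := by
  unfold nw
  rw [min_comm, max_comm]

lemma nw_row {r s : ℕ} (n : Fin r → ℕ) (m : Fin s → ℕ)
    (hN : ∑ i, n i = ∑ j, m j) (i : Fin r) : ∑ j, nw n m i j = n i := by
  set A0 := cum r n i.val with hA0
  set A1 := cum r n (i.val + 1) with hA1
  have hA : A0 ≤ A1 := cum_mono n (Nat.le_succ _)
  set c : ℕ → ℕ := fun t => max A0 (min A1 (cum s m t)) with hcdef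
  have hcm : Monotone c := by
    intro x y hxy
    have := cum_mono m hxy
    simp only [hcdef]
    omega
  have hterm : ∀ j : Fin s, nw n m i j = c (j.val + 1) - c j.val := by
    intro j
    have h1 : cum s m j.val ≤ cum s m (j.val + 1) := cum_mono m (Nat.le_succ _)
    simp only [nw, hcdef, ← hA0, ← hA1]
    omega
  rw [Finset.sum_congr rfl fun j _ => hterm j]
  rw [Fin.sum_univ_eq_sum_range (fun t => c (t + 1) - c t) s]
  rw [Finset.sum_range_tsub hcm]
  have hc0 : c 0 = A0 := by simp [hcdef, cum_zero]
  have hcs : c s = A1 := by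
    have h1 : A1 ≤ cum s m s := by
      rw [cum_top m le_rfl, ← hN, hA1]
      calc cum r n (i.val + 1) ≤ cum r n r := cum_mono n i.isLt
        _ = ∑ i, n i := cum_top n le_rfl
    simp only [hcdef]
    omega
  have hsucc : A1 = A0 + n i := by
    rw [hA1, cum_succ, dif_pos i.isLt, Fin.eta, hA0]
  omega

lemma nw_col {r s : ℕ} (n : Fin r → ℕ) (m : Fin s → ℕ)
    (hN : ∑ i, n i = ∑ j, m j) (j : Fin s) : ∑ i, nw n m i j = m j := by
  rw [Finset.sum_congr rfl fun i _ => nw_symm n m i j]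
  exact nw_row m n hN.symm j

lemma nw_stair {r s : ℕ} (n : Fin r → ℕ) (m : Fin s → ℕ) : StairP (nw n m) := by
  intro i p j q hij hpq hip hqj
  have h1 : max (cum r n i.val) (cum s m j.val)
      < min (cum r n (i.val + 1)) (cum s m (j.val + 1)) := by
    unfold nw at hij; omega
  have h2 : max (cum r n p.val) (cum s m q.val)
      < min (cum r n (p.val + 1)) (cum s m (q.val + 1)) := by
    unfold nw at hpq; omega
  have h3 : cum r n (i.val + 1) ≤ cum r n p.val := cum_mono n hip
  have h4 : cum s m (q.val + 1) ≤ cum s m j.val := cum_mono m hqj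
  omega

lemma dplus_iff {r s : ℕ} (K : Matrix (Fin r) (Fin s) ℕ) :
    (2 * ∑ i, ∑ p, ∑ j, ∑ q, (if i < p ∧ q < j then K i j * K p q else 0) = 0) ↔
      ¬ ∃ i p j q, 0 < K i j ∧ 0 < K p q ∧ i < p ∧ q < j := by
  rw [Nat.mul_eq_zero]
  simp only [OfNat.ofNat_ne_zero, false_or, Finset.sum_eq_zero_iff, Finset.mem_univ,
    true_implies]
  constructor
  · rintro h ⟨i, p, j, q, h1, h2, h3, h4⟩
    have := h i p j q
    rw [if_pos ⟨h3, h4⟩] at this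
    have := Nat.mul_pos h1 h2
    omega
  · intro h i p j q
    split_ifs with hc
    · by_contra hz
      rcases Nat.eq_zero_or_pos (K i j) with h1 | h1
      · exact hz (by rw [h1, zero_mul])
      rcases Nat.eq_zero_or_pos (K p q) with h2 | h2
      · exact hz (by rw [h2, mul_zero])
      exact h ⟨i, p, j, q, h1, h2, hc.1, hc.2⟩
    · rfl

end Stmt17Aux

/-- For contingency tables with positive margins (`r, s ≥ 2`): `D_+(K) = 0` iff `K` is
staircase-ordered (no pairs `(i,j), (p,q)` with `k_{ij} > 0`, `k_{pq} > 0`, `i < p`,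
`j > q`); moreover, among all contingency tables with the given margins exactly one
satisfies `D_+(K) = 0`. -/
theorem stmt17 (r s : ℕ) (hr : 2 ≤ r) (hs : 2 ≤ s)
    (n : Fin r → ℕ) (m : Fin s → ℕ)
    (hn : ∀ i, 0 < n i) (hm : ∀ j, 0 < m j) (hN : ∑ i, n i = ∑ j, m j) :
    (∀ K : Matrix (Fin r) (Fin s) ℕ,
      (∀ i, ∑ j, K i j = n i) → (∀ j, ∑ i, K i j = m j) →
      ((2 * ∑ i, ∑ p, ∑ j, ∑ q, (if i < p ∧ q < j then K i j * K p q else 0) = 0) ↔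
        ¬ ∃ i p j q, 0 < K i j ∧ 0 < K p q ∧ i < p ∧ q < j)) ∧
    (∃! K : Matrix (Fin r) (Fin s) ℕ,
      (∀ i, ∑ j, K i j = n i) ∧ (∀ j, ∑ i, K i j = m j) ∧
      2 * ∑ i, ∑ p, ∑ j, ∑ q, (if i < p ∧ q < j then K i j * K p q else 0) = 0) := by
  open Stmt17Aux in
  refine ⟨fun K _ _ => dplus_iff K, ?_⟩
  refine ⟨nw n m, ⟨fun i => nw_row n m hN i, fun j => nw_col n m hN j, ?_⟩, ?_⟩
  · rw [dplus_iff]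
    rintro ⟨i, p, j, q, h1, h2, h3, h4⟩
    exact nw_stair n m i p j q h1 h2 h3 h4
  · rintro L ⟨hL1, hL2, hL3⟩
    rw [dplus_iff] at hL3
    have hLs : StairP L := by
      intro i p j q h1 h2 h3 h4
      exact hL3 ⟨i, p, j, q, h1, h2, h3, h4⟩
    exact stair_unique L (nw n m) hL1 hL2 hLs
      (fun i => nw_row n m hN i) (fun j => nw_col n m hN j) (nw_stair n m)
end

section
/- Consider the Hessian quadratic form H(A) = tr(A ρ' A θ − A² ρ' θ) at a critical point, where ρ' and θ are diagonal real matrices with diagonal entries λ_β and ε_β that commute. Writing A Hermitian with entries A_{βγ} = x_{βγ} + i y_{βγ} (β < γ), one has H(A) = − Σ_{β<γ} (λ_β − λ_γ)(ε_β − ε_γ)(x_{βγ}² + y_{βγ}²). -/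
open Matrix

lemma sym_sum {N : ℕ} (f : Fin N → Fin N → ℂ) (hdiag : ∀ i, f i i = 0) :
    ∑ i, ∑ j, f i j = ∑ i, ∑ j, if i < j then f i j + f j i else 0 := by
  have h1 : ∑ i, ∑ j, f i j
      = (∑ i, ∑ j, if i < j then f i j else 0)
        + ∑ i, ∑ j, if j < i then f i j else 0 := by
    rw [← Finset.sum_add_distrib]
    refine Finset.sum_congr rfl fun i _ => ?_
    rw [← Finset.sum_add_distrib]
    refine Finset.sum_congr rfl fun j _ => ?_
    rcases lt_trichotomy i j with h | h | h
    · simp [h, not_lt_of_gt h]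
    · simp [h, hdiag]
    · simp [h, not_lt_of_gt h]
  have h2 : (∑ i, ∑ j, if j < i then f i j else 0)
      = ∑ i, ∑ j, if i < j then f j i else 0 := Finset.sum_comm
  rw [h1, h2, ← Finset.sum_add_distrib]
  refine Finset.sum_congr rfl fun i _ => ?_
  rw [← Finset.sum_add_distrib]
  refine Finset.sum_congr rfl fun j _ => ?_
  by_cases h : i < j <;> simp [h]

/-- The Hessian quadratic form `H(A) = tr(A ρ' A θ − A² ρ' θ)` at a critical point, for
real diagonal `ρ' = diag(λ)` and `θ = diag(ε)` and Hermitian `A` with entries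
`A_{βγ} = x_{βγ} + i y_{βγ}`, equals
`− Σ_{β<γ} (λ_β − λ_γ)(ε_β − ε_γ)(x_{βγ}² + y_{βγ}²)`. -/
theorem stmt18 (N : ℕ) (lam eps : Fin N → ℝ) (A : Matrix (Fin N) (Fin N) ℂ)
    (hA : A.IsHermitian) :
    Matrix.trace
      (A * Matrix.diagonal (fun i => (lam i : ℂ)) * A *
          Matrix.diagonal (fun i => (eps i : ℂ)) -
        A * A * Matrix.diagonal (fun i => (lam i : ℂ)) *
          Matrix.diagonal (fun i => (eps i : ℂ))) =
    ((-(∑ β, ∑ γ, if β < γ then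
        (lam β - lam γ) * (eps β - eps γ) * Complex.normSq (A β γ) else 0) : ℝ) : ℂ) := by
  have hconj : ∀ i j, A j i = (starRingEnd ℂ) (A i j) := fun i j => by
    have := hA.apply j i
    simpa using this.symm
  have hLHS : Matrix.trace
      (A * Matrix.diagonal (fun i => (lam i : ℂ)) * A *
          Matrix.diagonal (fun i => (eps i : ℂ)) -
        A * A * Matrix.diagonal (fun i => (lam i : ℂ)) *
          Matrix.diagonal (fun i => (eps i : ℂ)))
      = ∑ i, ∑ j, (((lam j - lam i) * eps i * Complex.normSq (A i j) : ℝ) : ℂ) := by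
    rw [Matrix.trace_sub]
    simp only [Matrix.trace, Matrix.diag, Matrix.mul_apply, Matrix.diagonal_apply,
      mul_ite, mul_zero, ite_mul, zero_mul, Finset.sum_ite_eq, Finset.sum_ite_eq',
      Finset.mem_univ, if_true]
    rw [← Finset.sum_sub_distrib]
    refine Finset.sum_congr rfl fun i _ => ?_
    simp only [Finset.sum_mul]
    rw [← Finset.sum_sub_distrib]
    refine Finset.sum_congr rfl fun j _ => ?_
    rw [hconj i j]
    push_cast
    linear_combination (((lam j : ℂ) - (lam i : ℂ)) * (eps i : ℂ)) * Complex.mul_conj (A i j)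
  rw [hLHS, sym_sum (fun i j => (((lam j - lam i) * eps i * Complex.normSq (A i j) : ℝ) : ℂ))
    (fun i => by push_cast; ring)]
  push_cast
  rw [← Finset.sum_neg_distrib]
  refine Finset.sum_congr rfl fun i _ => ?_
  rw [← Finset.sum_neg_distrib]
  refine Finset.sum_congr rfl fun j _ => ?_
  by_cases h : i < j
  · simp only [h, if_true]
    have hn : (Complex.normSq (A j i) : ℂ) = (Complex.normSq (A i j) : ℂ) := by
      rw [hconj i j, Complex.normSq_conj]
    rw [hn]; push_cast; ring
  · simp [h]
end
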